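/- For fixed natural numbers d and k with k ≤ d, the function f(x) = (binomial(d,x) + binomial(d,k−x)) / (binomial(d,x)·binomial(d−x,k−x)), defined for integers 0 ≤ x ≤ k, attains its minimum at x = ⌊k/2⌋ (equivalently at x = ⌈k/2⌉, where it takes the same value). -/

import Mathlib

private def hh (d k x : ℕ) : ℚ := (d.choose x : ℚ) / (k.choose x)
private def ss (d k x : ℕ) : ℚ := hh d k x + hh d k (k - x)

private lemma hh_pos {d k x : ℕ} (hkd : k ≤ d) (hx : x ≤ k) : 0 < hh d k x :=
  div_pos (by exact_mod_cast Nat.choose_pos (hx.trans hkd)) (by exact_mod_cast Nat.choose_pos hx)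

private lemma hh_succ {d k x : ℕ} (hkd : k ≤ d) (hx : x < k) :
    hh d k (x + 1) * ((k - x : ℕ) : ℚ) = hh d k x * ((d - x : ℕ) : ℚ) := by
  have h1 : ((d.choose (x+1) : ℚ)) * (x+1) = (d.choose x : ℚ) * ((d - x : ℕ) : ℚ) := by
    exact_mod_cast congrArg (Nat.cast (R := ℚ)) (Nat.choose_succ_right_eq d x)
  have h2 : ((k.choose (x+1) : ℚ)) * (x+1) = (k.choose x : ℚ) * ((k - x : ℕ) : ℚ) := by
    exact_mod_cast congrArg (Nat.cast (R := ℚ)) (Nat.choose_succ_right_eq k x)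
  have hk0 : (k.choose x : ℚ) ≠ 0 := by exact_mod_cast (Nat.choose_pos hx.le).ne'
  have hk1 : (k.choose (x+1) : ℚ) ≠ 0 := by exact_mod_cast (Nat.choose_pos hx).ne'
  have hx1 : ((x : ℚ) + 1) ≠ 0 := by positivity
  unfold hh
  field_simp
  nlinarith [h1, h2]

private lemma hh_mono {d k : ℕ} (hkd : k ≤ d) : ∀ {a b : ℕ}, a ≤ b → b ≤ k → hh d k a ≤ hh d k b := by
  intro a b hab hbk
  induction b, hab using Nat.le_induction with
  | base => exact le_refl _
  | succ n hn ih =>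
    have hnk : n < k := Nat.lt_of_succ_le hbk
    have h := hh_succ hkd hnk
    have hkx : (0:ℚ) < ((k - n : ℕ) : ℚ) := by
      have : 0 < k - n := by omega
      exact_mod_cast this
    have hdk : ((k - n : ℕ) : ℚ) ≤ ((d - n : ℕ) : ℚ) := by
      have : k - n ≤ d - n := by omega
      exact_mod_cast this
    have hp := hh_pos hkd (d := d) (x := n) hnk.le
    refine (ih hnk.le).trans ?_
    calc hh d k n = hh d k n * ((k - n : ℕ) : ℚ) / ((k - n : ℕ) : ℚ) := by field_simp
    _ ≤ hh d k n * ((d - n : ℕ) : ℚ) / ((k - n : ℕ) : ℚ) := by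
        gcongr
    _ = hh d k (n+1) := by rw [← h]; field_simp

private lemma ss_step {d k x : ℕ} (hkd : k ≤ d) (hx : 2 * x < k) :
    ss d k (x + 1) ≤ ss d k x := by
  have hx1 : x < k := by omega
  have hx2 : k - x - 1 < k := by omega
  have h1 := hh_succ hkd hx1
  have h2 := hh_succ hkd hx2
  have e1 : k - (k - x - 1) = x + 1 := by omega
  have e2 : k - x - 1 + 1 = k - x := by omega
  rw [e1] at h2
  rw [e2] at h2
  -- h2 : hh d k (k-x) * (x+1) = hh d k (k-x-1) * (d - (k-x-1))
  have hmono : hh d k x ≤ hh d k (k - x - 1) := hh_mono hkd (by omega) (by omega)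
  have hp1 : 0 < hh d k x := hh_pos hkd hx1.le
  have hp2 : 0 < hh d k (k - x - 1) := hh_pos hkd hx2.le
  have hu : (0:ℚ) < ((k - x : ℕ) : ℚ) := by exact_mod_cast (show 0 < k - x by omega)
  have hv : (0:ℚ) < ((x + 1 : ℕ) : ℚ) := by exact_mod_cast (show 0 < x + 1 by omega)
  have hvu : ((x + 1 : ℕ) : ℚ) ≤ ((k - x : ℕ) : ℚ) := by exact_mod_cast (show x + 1 ≤ k - x by omega)
  have hdx : ((d - x : ℕ) : ℚ) = ((d - k : ℕ) : ℚ) + ((k - x : ℕ) : ℚ) := by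
    push_cast [Nat.cast_sub (by omega : x ≤ d), Nat.cast_sub hkd, Nat.cast_sub hx1.le]; ring
  have hdy : ((d - (k - x - 1) : ℕ) : ℚ) = ((d - k : ℕ) : ℚ) + ((x + 1 : ℕ) : ℚ) := by
    have h3 : (k - x - 1 : ℕ) = k - (x + 1) := by omega
    rw [h3]
    push_cast [Nat.cast_sub (show k - (x + 1) ≤ d by omega),
      Nat.cast_sub (show x + 1 ≤ k by omega), Nat.cast_sub hkd]
    ring
  have hD : (0:ℚ) ≤ ((d - k : ℕ) : ℚ) := by positivity
  unfold ss
  have e3 : k - (x + 1) = k - x - 1 := by omega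
  rw [e3]
  -- goal: hh (x+1) + hh (k-x-1) ≤ hh x + hh (k-x)
  rw [hdx] at h1; rw [hdy] at h2
  set A := hh d k x
  set B := hh d k (k - x - 1)
  set D := ((d - k : ℕ) : ℚ)
  set u := ((k - x : ℕ) : ℚ)
  set v := ((x + 1 : ℕ) : ℚ)
  -- h1 : hh (x+1) * u = A * (D + u); h2 : hh (k-x) * v = B * (D + v)
  have key : A * D * v ≤ B * D * u :=
    (mul_le_mul (mul_le_mul hmono le_rfl hD hp2.le) hvu hv.le (by positivity))
  nlinarith [mul_pos hu hv, h1, h2, key]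

private lemma ss_repr {d k x : ℕ} (hkd : k ≤ d) (hx : x ≤ k) :
    ((d.choose x + d.choose (k - x) : ℚ)) /
        ((d.choose x : ℚ) * (d - x).choose (k - x)) = ss d k x / (d.choose k : ℚ) := by
  have id1 : (d.choose k : ℚ) * k.choose x = (d.choose x : ℚ) * (d - x).choose (k - x) := by
    exact_mod_cast congrArg (Nat.cast (R := ℚ)) (Nat.choose_mul (n := d) hx)
  have hs : (k.choose (k - x) : ℚ) = k.choose x := by
    exact_mod_cast congrArg (Nat.cast (R := ℚ)) (Nat.choose_symm hx)
  have n1 : (d.choose k : ℚ) ≠ 0 := by exact_mod_cast (Nat.choose_pos hkd).ne'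
  have n2 : (k.choose x : ℚ) ≠ 0 := by exact_mod_cast (Nat.choose_pos hx).ne'
  have n3 : (d.choose x : ℚ) ≠ 0 := by exact_mod_cast (Nat.choose_pos (hx.trans hkd)).ne'
  have n4 : ((d - x).choose (k - x) : ℚ) ≠ 0 := by
    exact_mod_cast (Nat.choose_pos (by omega : k - x ≤ d - x)).ne'
  unfold ss hh
  rw [hs, ← id1]
  rw [div_add_div _ _ n2 n2, div_div]
  rw [div_eq_div_iff (by positivity) (by positivity)]
  ring

private lemma ss_symm {d k x : ℕ} (hx : x ≤ k) : ss d k (k - x) = ss d k x := by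
  unfold ss
  rw [Nat.sub_sub_self hx, add_comm]

private lemma ss_down {d k : ℕ} (hkd : k ≤ d) : ∀ {a b : ℕ}, a ≤ b → 2 * b ≤ k →
    ss d k b ≤ ss d k a := by
  intro a b hab hbk
  induction b, hab using Nat.le_induction with
  | base => exact le_refl _
  | succ n hn ih =>
    exact (ss_step hkd (by omega)).trans (ih (by omega))

private lemma ss_min {d k x : ℕ} (hkd : k ≤ d) (hx : x ≤ k) :
    ss d k (k / 2) ≤ ss d k x := by
  rcases le_or_gt x (k / 2) with h | h
  · exact ss_down hkd h (by omega)
  · rw [← ss_symm hx]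
    exact ss_down hkd (by omega) (by omega)

theorem stmt10 (d k : ℕ) (hkd : k ≤ d) :
    (∀ x : ℕ, x ≤ k →
      ((d.choose (k / 2) + d.choose (k - k / 2) : ℚ)) /
          ((d.choose (k / 2) : ℚ) * (d - k / 2).choose (k - k / 2))
        ≤ ((d.choose x + d.choose (k - x) : ℚ)) /
            ((d.choose x : ℚ) * (d - x).choose (k - x))) ∧
    ((d.choose (k / 2) + d.choose (k - k / 2) : ℚ)) /
        ((d.choose (k / 2) : ℚ) * (d - k / 2).choose (k - k / 2))
      = ((d.choose ((k + 1) / 2) + d.choose (k - (k + 1) / 2) : ℚ)) /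
          ((d.choose ((k + 1) / 2) : ℚ) * (d - (k + 1) / 2).choose (k - (k + 1) / 2)) := by
  have hm : k / 2 ≤ k := by omega
  have hm' : (k + 1) / 2 ≤ k := by omega
  constructor
  · intro x hx
    rw [ss_repr hkd hm, ss_repr hkd hx]
    have hD : (0:ℚ) < (d.choose k : ℚ) := by exact_mod_cast Nat.choose_pos hkd
    exact div_le_div_of_nonneg_right (ss_min hkd hx) hD.le
  · rw [ss_repr hkd hm, ss_repr hkd hm']
    congr 1
    have he : (k + 1) / 2 = k - k / 2 := by omega
    rw [he, ss_symm hm]
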